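/- Fix integers n ≥ 1 and 1 ≤ m₀ ≤ n. For each m₀ ≤ m ≤ n let F_m : {0,1}^m → {0,1}^m be a pairwise independent random function, with F_{m₀},…,F_n mutually independent, and define r := r^{m₀} by the downward recursion r^{n+1} = id and r^m(x) = r^{m+1}(F_m(MSB_m(x)) ‖ LSB_{n−m}(x)). Let 0 ≤ d ≤ n−1 and let x ≠ y ∈ {0,1}^n satisfy LSB_d(x) = LSB_d(y) and LSB_{d+1}(x) ≠ LSB_{d+1}(y). Then Pr[r(x) = r(y)] ≤ 2^{d+1}/2^n. -/

import Mathlib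

open scoped BigOperators Classical

/-- Probability of an event under a (finite, weighted) probability mass function. -/
noncomputable def pr {Ω : Type*} [Fintype Ω] (p : Ω → ℝ) (E : Ω → Prop) : ℝ :=
  ∑ ω, if E ω then p ω else 0

/-- The `m` most significant bits of an `n`-bit string (index `0` is most significant). -/
def msb {n : ℕ} (m : ℕ) (h : m ≤ n) (x : Fin n → Bool) : Fin m → Bool :=
  fun s => x ⟨s.1, lt_of_lt_of_le s.2 h⟩

/-- The `k` least significant bits of an `n`-bit string (junk `false` if `k > n`;
in all uses below `k ≤ n`). -/
def lsb {n : ℕ} (k : ℕ) (x : Fin n → Bool) : Fin k → Bool :=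
  fun s => if h : n - k + (s : ℕ) < n then x ⟨n - k + s.1, h⟩ else false

/-- Replace the `m` most significant bits of `x` by `f m` applied to them,
keeping the `n - m` least significant bits: this is `f_m(MSB_m(x)) ‖ LSB_{n-m}(x)`. -/
def rStep (n : ℕ) (f : ∀ m : ℕ, (Fin m → Bool) → (Fin m → Bool)) (m : ℕ) (h : m ≤ n)
    (x : Fin n → Bool) : Fin n → Bool :=
  fun t => if ht : (t : ℕ) < m then f m (msb m h x) ⟨t.1, ht⟩ else x t

/-- The downward recursion `r^{n+1} = id`, `r^m(x) = r^{m+1}(f_m(MSB_m(x)) ‖ LSB_{n-m}(x))`. -/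
def rRec (n : ℕ) (f : ∀ m : ℕ, (Fin m → Bool) → (Fin m → Bool)) (m : ℕ)
    (x : Fin n → Bool) : Fin n → Bool :=
  if h : m ≤ n then rRec n f (m + 1) (rStep n f m h x) else x
termination_by n + 1 - m
decreasing_by omega

/-! ### Auxiliary definitions and lemmas -/

lemma rRec_unfold (n : ℕ) (f : ∀ m : ℕ, (Fin m → Bool) → (Fin m → Bool)) (m : ℕ)
    (x : Fin n → Bool) :
    rRec n f m x = if h : m ≤ n then rRec n f (m + 1) (rStep n f m h x) else x := by
  rw [rRec]

lemma rRec_of_gt {n m : ℕ} (f : ∀ m : ℕ, (Fin m → Bool) → (Fin m → Bool))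
    (x : Fin n → Bool) (h : n < m) : rRec n f m x = x := by
  rw [rRec_unfold]; exact dif_neg (by omega)

/-- The state after applying steps `m₀, m₀+1, …, m₀+j-1` to `x`. -/
def stUp (n : ℕ) (f : ∀ m : ℕ, (Fin m → Bool) → (Fin m → Bool)) (m₀ : ℕ)
    (x : Fin n → Bool) : ℕ → Fin n → Bool
  | 0 => x
  | j + 1 => if h : m₀ + j ≤ n then rStep n f (m₀ + j) h (stUp n f m₀ x j)
             else stUp n f m₀ x j

lemma rRec_stUp (n : ℕ) (f : ∀ m : ℕ, (Fin m → Bool) → (Fin m → Bool)) (m₀ : ℕ)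
    (x : Fin n → Bool) : ∀ j, rRec n f m₀ x = rRec n f (m₀ + j) (stUp n f m₀ x j) := by
  intro j
  induction j with
  | zero => simp [stUp]
  | succ j ih =>
    rw [ih, rRec_unfold]
    by_cases h : m₀ + j ≤ n
    · rw [dif_pos h]
      have : stUp n f m₀ x (j+1) = rStep n f (m₀ + j) h (stUp n f m₀ x j) := dif_pos h
      rw [this]
      rfl
    · rw [dif_neg h]
      have h1 : stUp n f m₀ x (j+1) = stUp n f m₀ x j := dif_neg h
      rw [h1, rRec_of_gt _ _ (by omega)]

lemma rRec_eq_stUp (n : ℕ) (f : ∀ m : ℕ, (Fin m → Bool) → (Fin m → Bool)) (m₀ : ℕ)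
    (h : m₀ ≤ n + 1) (x : Fin n → Bool) :
    rRec n f m₀ x = stUp n f m₀ x (n + 1 - m₀) := by
  rw [rRec_stUp n f m₀ x (n + 1 - m₀), rRec_of_gt _ _ (by omega)]

lemma rStep_apply_ge {n : ℕ} (f : ∀ m : ℕ, (Fin m → Bool) → (Fin m → Bool)) {m : ℕ}
    (h : m ≤ n) (x : Fin n → Bool) (t : Fin n) (ht : m ≤ (t : ℕ)) :
    rStep n f m h x t = x t := dif_neg (by omega)

lemma rStep_apply_lt {n : ℕ} (f : ∀ m : ℕ, (Fin m → Bool) → (Fin m → Bool)) {m : ℕ}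
    (h : m ≤ n) (x : Fin n → Bool) (t : Fin n) (ht : (t : ℕ) < m) :
    rStep n f m h x t = f m (msb m h x) ⟨t.1, ht⟩ := dif_pos ht

lemma rStep_congr {n : ℕ} {f g : ∀ m : ℕ, (Fin m → Bool) → (Fin m → Bool)} {m : ℕ}
    (h : m ≤ n) (x : Fin n → Bool) (hfg : f m = g m) :
    rStep n f m h x = rStep n g m h x := by
  funext t; unfold rStep; rw [hfg]

lemma stUp_congr {n : ℕ} {f g : ∀ m : ℕ, (Fin m → Bool) → (Fin m → Bool)} (m₀ : ℕ)
    (x : Fin n → Bool) (j : ℕ) (hfg : ∀ i, m₀ ≤ i → i < m₀ + j → f i = g i) :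
    stUp n f m₀ x j = stUp n g m₀ x j := by
  induction j with
  | zero => rfl
  | succ j ih =>
    have ih' := ih (fun i h1 h2 => hfg i h1 (by omega))
    show dite _ _ _ = dite _ _ _
    by_cases h : m₀ + j ≤ n
    · rw [dif_pos h, dif_pos h, ih', rStep_congr h _ (hfg (m₀ + j) (by omega) (by omega))]
    · rw [dif_neg h, dif_neg h, ih']

lemma msb_ne {n m : ℕ} (h : m ≤ n) {z w : Fin n → Bool} (i : Fin n) (hi : (i : ℕ) < m)
    (hne : z i ≠ w i) : msb m h z ≠ msb m h w := by
  intro he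
  apply hne
  have := congrFun he ⟨i, hi⟩
  simpa [msb, Fin.eta] using this


section PrLemmas

variable {Ω : Type*} [Fintype Ω] {p : Ω → ℝ}

lemma pr_nonneg (hp0 : ∀ ω, 0 ≤ p ω) (E : Ω → Prop) : 0 ≤ pr p E :=
  Finset.sum_nonneg fun ω _ => by by_cases h : E ω <;> simp [h, hp0 ω]

lemma pr_congr {E E' : Ω → Prop} (h : ∀ ω, E ω ↔ E' ω) : pr p E = pr p E' :=
  Finset.sum_congr rfl fun ω _ => by rw [if_congr (h ω) rfl rfl]

lemma pr_false : pr p (fun _ => False) = 0 := by simp [pr]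

lemma pr_true (hp1 : ∑ ω, p ω = 1) : pr p (fun _ => True) = 1 := by simp [pr, hp1]

lemma pr_partition {I : Type*} [Fintype I] (T : Ω → I) (E : Ω → Prop) :
    pr p E = ∑ g : I, pr p (fun ω => T ω = g ∧ E ω) := by
  unfold pr
  rw [Finset.sum_comm]
  refine Finset.sum_congr rfl fun ω _ => ?_
  by_cases hE : E ω
  · simp only [hE, and_true]
    classical
    rw [show (∑ g : I, if T ω = g then p ω else 0) = if T ω ∈ Finset.univ then p ω else 0
      from Finset.sum_ite_eq Finset.univ (T ω) (fun _ => p ω)]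
    simp
  · simp [hE]

lemma pr_union_bound (hp0 : ∀ ω, 0 ≤ p ω) {s : Finset ℕ} {E : Ω → Prop}
    {Em : ℕ → Ω → Prop} (h : ∀ ω, E ω → ∃ m ∈ s, Em m ω) :
    pr p E ≤ ∑ m ∈ s, pr p (Em m) := by
  unfold pr
  calc (∑ ω, if E ω then p ω else 0)
      ≤ ∑ ω, ∑ m ∈ s, (if Em m ω then p ω else 0) := by
        refine Finset.sum_le_sum fun ω _ => ?_
        by_cases hE : E ω
        · obtain ⟨m, hm, hEm⟩ := h ω hE
          calc (if E ω then p ω else 0) = (if Em m ω then p ω else 0) := by simp [hE, hEm]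
          _ ≤ ∑ m ∈ s, (if Em m ω then p ω else 0) :=
            Finset.single_le_sum (f := fun m => if Em m ω then p ω else 0)
              (fun i _ => by by_cases hi : Em i ω <;> simp [hi, hp0 ω]) hm
        · simp only [hE, if_false]
          exact Finset.sum_nonneg fun i _ => by by_cases hi : Em i ω <;> simp [hi, hp0 ω]
    _ = ∑ m ∈ s, ∑ ω, (if Em m ω then p ω else 0) := Finset.sum_comm

end PrLemmas

/-! ### Deterministic collision extraction -/

lemma det_collision (n m₀ d : ℕ) (hm₀n : m₀ ≤ n) (hd : d + 1 ≤ n)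
    (f : ∀ m : ℕ, (Fin m → Bool) → (Fin m → Bool))
    (x y : Fin n → Bool) (hxy : x ≠ y)
    (hagree : ∀ i : Fin n, n - d ≤ (i : ℕ) → x i = y i)
    (hne : x ⟨n - d - 1, by omega⟩ ≠ y ⟨n - d - 1, by omega⟩)
    (hcol : rRec n f m₀ x = rRec n f m₀ y) :
    ∃ m, m₀ ≤ m ∧ n - d ≤ m ∧ ∃ hm : m ≤ n,
      msb m hm (stUp n f m₀ x (m - m₀)) ≠ msb m hm (stUp n f m₀ y (m - m₀)) ∧
      f m (msb m hm (stUp n f m₀ x (m - m₀))) = f m (msb m hm (stUp n f m₀ y (m - m₀))) := by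
  by_contra hno
  push_neg at hno
  have hk : n - d - 1 < n := by omega
  have main : ∀ j, m₀ + j ≤ n + 1 →
      ((∀ i : Fin n, m₀ + j ≤ (i : ℕ) → n - d ≤ (i : ℕ) →
          stUp n f m₀ x j i = stUp n f m₀ y j i) ∧
        (m₀ + j ≤ n - d →
          stUp n f m₀ x j ⟨n - d - 1, hk⟩ ≠ stUp n f m₀ y j ⟨n - d - 1, hk⟩) ∧
        stUp n f m₀ x j ≠ stUp n f m₀ y j) := by
    intro j
    induction j with
    | zero =>
      intro _
      exact ⟨fun i _ hi => hagree i hi, fun _ => hne, hxy⟩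
    | succ j ih =>
      intro hj1
      have hmn : m₀ + j ≤ n := by omega
      obtain ⟨I1, I2, I3⟩ := ih (by omega)
      have hx1 : stUp n f m₀ x (j + 1) = rStep n f (m₀ + j) hmn (stUp n f m₀ x j) :=
        dif_pos hmn
      have hy1 : stUp n f m₀ y (j + 1) = rStep n f (m₀ + j) hmn (stUp n f m₀ y j) :=
        dif_pos hmn
      rw [hx1, hy1]
      refine ⟨?_, ?_, ?_⟩
      · intro i h1 h2
        rw [rStep_apply_ge _ _ _ _ (by omega), rStep_apply_ge _ _ _ _ (by omega)]
        exact I1 i (by omega) h2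
      · intro hph
        rw [rStep_apply_ge _ _ _ _ (by simp; omega), rStep_apply_ge _ _ _ _ (by simp; omega)]
        exact I2 (by omega)
      · by_cases hcase : m₀ + j < n - d
        · -- phase 1: the bit at position n-d-1 is preserved and still differs
          intro he
          have h1 := congrFun he ⟨n - d - 1, hk⟩
          rw [rStep_apply_ge _ _ _ _ (by simp; omega), rStep_apply_ge _ _ _ _ (by simp; omega)]
            at h1
          exact I2 (by omega) h1
        · -- phase 2
          have hcase' : n - d ≤ m₀ + j := by omega
          -- the states differ at some index < m₀ + j
          have hdiff : ∃ i : Fin n, (i : ℕ) < m₀ + j ∧ stUp n f m₀ x j i ≠ stUp n f m₀ y j i := by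
            by_contra hall
            push_neg at hall
            apply I3
            funext i
            by_cases hi : (i : ℕ) < m₀ + j
            · exact hall i hi
            · exact I1 i (by omega) (by omega)
          obtain ⟨i, hilt, hine⟩ := hdiff
          have hmsb : msb (m₀ + j) hmn (stUp n f m₀ x j) ≠ msb (m₀ + j) hmn (stUp n f m₀ y j) :=
            msb_ne hmn i hilt hine
          have hout := hno (m₀ + j) (by omega) (by omega) hmn
          rw [Nat.add_sub_cancel_left] at hout
          have hfne : f (m₀ + j) (msb (m₀ + j) hmn (stUp n f m₀ x j)) ≠
              f (m₀ + j) (msb (m₀ + j) hmn (stUp n f m₀ y j)) := hout hmsb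
          obtain ⟨s, hs⟩ := Function.ne_iff.mp hfne
          intro he
          apply hs
          have h2 := congrFun he ⟨s.1, lt_of_lt_of_le s.2 hmn⟩
          rw [rStep_apply_lt _ _ _ _ (by exact s.2), rStep_apply_lt _ _ _ _ (by exact s.2)] at h2
          simpa using h2
  have hfin := (main (n + 1 - m₀) (by omega)).2.2
  apply hfin
  rw [← rRec_eq_stUp n f m₀ (by omega) x, ← rRec_eq_stUp n f m₀ (by omega) y]
  exact hcol

/-! ### Gluing tuples of functions -/

/-- Glue a tuple indexed by `[m₀, m)`, a single function at `m`, and a tuple indexed by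
`(m, n]` into a globally indexed family. -/
def glueFn (n m₀ m : ℕ)
    (u : ∀ i : {i // i ∈ Finset.Ico m₀ m}, (Fin (i : ℕ) → Bool) → (Fin (i : ℕ) → Bool))
    (h : (Fin m → Bool) → (Fin m → Bool))
    (v : ∀ i : {i // i ∈ Finset.Ioc m n}, (Fin (i : ℕ) → Bool) → (Fin (i : ℕ) → Bool)) :
    ∀ i : ℕ, (Fin i → Bool) → (Fin i → Bool) :=
  fun i => if h1 : i ∈ Finset.Ico m₀ m then u ⟨i, h1⟩
    else if h2 : m = i then h2 ▸ h
    else if h3 : i ∈ Finset.Ioc m n then v ⟨i, h3⟩ else id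

/-- The lower part alone, glued with identities elsewhere. -/
def glFn (m₀ m : ℕ)
    (u : ∀ i : {i // i ∈ Finset.Ico m₀ m}, (Fin (i : ℕ) → Bool) → (Fin (i : ℕ) → Bool)) :
    ∀ i : ℕ, (Fin i → Bool) → (Fin i → Bool) :=
  fun i => if h1 : i ∈ Finset.Ico m₀ m then u ⟨i, h1⟩ else id

lemma glueFn_lt (n m₀ m : ℕ) (u) (h) (v) {i : ℕ} (hi : i ∈ Finset.Ico m₀ m) :
    glueFn n m₀ m u h v i = u ⟨i, hi⟩ := dif_pos hi

lemma glueFn_eq (n m₀ m : ℕ) (u) (h) (v) :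
    glueFn n m₀ m u h v m = h := by
  unfold glueFn
  rw [dif_neg (by simp [Finset.mem_Ico]), dif_pos rfl]

lemma glueFn_gt (n m₀ m : ℕ) (u) (h) (v) {i : ℕ} (hi : i ∈ Finset.Ioc m n) :
    glueFn n m₀ m u h v i = v ⟨i, hi⟩ := by
  unfold glueFn
  have h1 : i ∉ Finset.Ico m₀ m := by
    simp only [Finset.mem_Ioc] at hi; simp [Finset.mem_Ico]; omega
  have h2 : ¬ (m = i) := by
    simp only [Finset.mem_Ioc] at hi; omega
  rw [dif_neg h1, dif_neg h2, dif_pos hi]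

lemma glFn_lt (m₀ m : ℕ) (u) {i : ℕ} (hi : i ∈ Finset.Ico m₀ m) :
    glFn m₀ m u i = u ⟨i, hi⟩ := dif_pos hi

/-! ### The key per-step collision bound -/

lemma key_bound
    (n m₀ : ℕ) {Ω : Type*} [Fintype Ω] (p : Ω → ℝ)
    (hp0 : ∀ ω, 0 ≤ p ω) (hp1 : ∑ ω, p ω = 1)
    (F : ∀ m : ℕ, Ω → (Fin m → Bool) → (Fin m → Bool))
    (hFpair : ∀ m, m₀ ≤ m → m ≤ n → ∀ x y : Fin m → Bool, x ≠ y →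
      ∀ a b : Fin m → Bool,
        pr p (fun ω => F m ω x = a ∧ F m ω y = b) = ((1 : ℝ) / 2 ^ m) ^ 2)
    (hInd : ∀ g : ∀ m : ℕ, (Fin m → Bool) → (Fin m → Bool),
      pr p (fun ω => ∀ m ∈ Finset.Icc m₀ n, F m ω = g m)
        = ∏ m ∈ Finset.Icc m₀ n, pr p (fun ω => F m ω = g m))
    (x y : Fin n → Bool) (m : ℕ) (hm1 : m₀ ≤ m) (hm2 : m ≤ n) :
    pr p (fun ω => ∃ hm : m ≤ n,
      msb m hm (stUp n (fun i => F i ω) m₀ x (m - m₀)) ≠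
        msb m hm (stUp n (fun i => F i ω) m₀ y (m - m₀)) ∧
      F m ω (msb m hm (stUp n (fun i => F i ω) m₀ x (m - m₀))) =
        F m ω (msb m hm (stUp n (fun i => F i ω) m₀ y (m - m₀)))) ≤ (1 / 2 : ℝ) ^ m := by
  classical
  -- abbreviations
  set q : ∀ i : ℕ, ((Fin i → Bool) → (Fin i → Bool)) → ℝ :=
    fun i h => pr p (fun ω => F i ω = h) with hq
  have hq0 : ∀ i h, 0 ≤ q i h := fun i h => pr_nonneg hp0 _
  have hq1 : ∀ i : ℕ, (∑ h : (Fin i → Bool) → (Fin i → Bool), q i h) = 1 := by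
    intro i
    have h0 := pr_partition (p := p) (fun ω => F i ω) (fun _ => True)
    rw [pr_true hp1] at h0
    calc (∑ h : (Fin i → Bool) → (Fin i → Bool), q i h)
        = ∑ h : (Fin i → Bool) → (Fin i → Bool), pr p (fun ω => F i ω = h ∧ True) :=
          Finset.sum_congr rfl fun h _ => pr_congr fun ω => (and_iff_left trivial).symm
      _ = 1 := h0.symm
  -- the three-part tuple of the random functions
  set T3 : Ω →
      (∀ i : {i // i ∈ Finset.Ico m₀ m}, (Fin (i : ℕ) → Bool) → (Fin (i : ℕ) → Bool)) ×
      ((Fin m → Bool) → (Fin m → Bool)) ×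
      (∀ i : {i // i ∈ Finset.Ioc m n}, (Fin (i : ℕ) → Bool) → (Fin (i : ℕ) → Bool)) :=
    fun ω => (fun i => F i ω, F m ω, fun i => F i ω) with hT3
  set A : (∀ i : {i // i ∈ Finset.Ico m₀ m}, (Fin (i : ℕ) → Bool) → (Fin (i : ℕ) → Bool)) →
      (Fin m → Bool) := fun u => msb m hm2 (stUp n (glFn m₀ m u) m₀ x (m - m₀)) with hA
  set B : (∀ i : {i // i ∈ Finset.Ico m₀ m}, (Fin (i : ℕ) → Bool) → (Fin (i : ℕ) → Bool)) →
      (Fin m → Bool) := fun u => msb m hm2 (stUp n (glFn m₀ m u) m₀ y (m - m₀)) with hB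
  set P1 : (∀ i : {i // i ∈ Finset.Ico m₀ m}, (Fin (i : ℕ) → Bool) → (Fin (i : ℕ) → Bool)) → ℝ :=
    fun u => ∏ i : {i // i ∈ Finset.Ico m₀ m}, q i (u i) with hP1
  set P2 : (∀ i : {i // i ∈ Finset.Ioc m n}, (Fin (i : ℕ) → Bool) → (Fin (i : ℕ) → Bool)) → ℝ :=
    fun v => ∏ i : {i // i ∈ Finset.Ioc m n}, q i (v i) with hP2
  have hP1nn : ∀ u, 0 ≤ P1 u := fun u => Finset.prod_nonneg fun i _ => hq0 _ _
  -- on the event `T3 ω = (u, h, v)` the target event is deterministic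
  have hEvC : ∀ u h v ω, T3 ω = (u, h, v) →
      ((∃ hm : m ≤ n,
        msb m hm (stUp n (fun i => F i ω) m₀ x (m - m₀)) ≠
          msb m hm (stUp n (fun i => F i ω) m₀ y (m - m₀)) ∧
        F m ω (msb m hm (stUp n (fun i => F i ω) m₀ x (m - m₀))) =
          F m ω (msb m hm (stUp n (fun i => F i ω) m₀ y (m - m₀)))) ↔
      (A u ≠ B u ∧ h (A u) = h (B u))) := by
    intro u h v ω ht
    have hcom : ∀ i : {i // i ∈ Finset.Ico m₀ m}, F i ω = u i :=
      fun i => congrFun (congrArg Prod.fst ht) i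
    have hFm : F m ω = h := congrArg (fun z => z.2.1) ht
    have hsx : stUp n (fun i => F i ω) m₀ x (m - m₀) = stUp n (glFn m₀ m u) m₀ x (m - m₀) := by
      apply stUp_congr
      intro i h1 h2
      have hi : i ∈ Finset.Ico m₀ m := by simp only [Finset.mem_Ico]; omega
      rw [glFn_lt m₀ m u hi]
      exact hcom ⟨i, hi⟩
    have hsy : stUp n (fun i => F i ω) m₀ y (m - m₀) = stUp n (glFn m₀ m u) m₀ y (m - m₀) := by
      apply stUp_congr
      intro i h1 h2
      have hi : i ∈ Finset.Ico m₀ m := by simp only [Finset.mem_Ico]; omega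
      rw [glFn_lt m₀ m u hi]
      exact hcom ⟨i, hi⟩
    constructor
    · rintro ⟨hm', hne', heq'⟩
      rw [hsx, hsy] at hne' heq'
      rw [hFm] at heq'
      exact ⟨hne', heq'⟩
    · rintro ⟨hne', heq'⟩
      refine ⟨hm2, ?_, ?_⟩
      · rw [hsx, hsy]; exact hne'
      · rw [hsx, hsy, hFm]; exact heq'
  -- the probability of hitting a given tuple factorises
  have hPtup : ∀ u h v, pr p (fun ω => T3 ω = (u, h, v)) = P1 u * (q m h * P2 v) := by
    intro u h v
    have h1 : pr p (fun ω => T3 ω = (u, h, v)) =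
        pr p (fun ω => ∀ i ∈ Finset.Icc m₀ n, F i ω = glueFn n m₀ m u h v i) := by
      apply pr_congr
      intro ω
      constructor
      · intro ht i hi
        rcases lt_trichotomy i m with hlt | heq | hgt
        · have hi1 : i ∈ Finset.Ico m₀ m := by
            simp only [Finset.mem_Icc] at hi; simp only [Finset.mem_Ico]; omega
          rw [glueFn_lt n m₀ m u h v hi1]
          exact congrFun (congrArg Prod.fst ht) ⟨i, hi1⟩
        · subst heq
          rw [glueFn_eq]
          exact congrArg (fun z => z.2.1) ht
        · have hi2 : i ∈ Finset.Ioc m n := by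
            simp only [Finset.mem_Icc] at hi; simp only [Finset.mem_Ioc]; omega
          rw [glueFn_gt n m₀ m u h v hi2]
          exact congrFun (congrArg (fun z => z.2.2) ht) ⟨i, hi2⟩
      · intro hall
        have e1 : (fun i : {i // i ∈ Finset.Ico m₀ m} => F i ω) = u := by
          funext i
          have hi : (i : ℕ) ∈ Finset.Icc m₀ n := by
            have := i.2; simp only [Finset.mem_Ico] at this
            simp only [Finset.mem_Icc]; omega
          rw [hall i hi, glueFn_lt n m₀ m u h v i.2]
        have e2 : F m ω = h := by
          have hi : m ∈ Finset.Icc m₀ n := by simp only [Finset.mem_Icc]; omega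
          rw [hall m hi, glueFn_eq]
        have e3 : (fun i : {i // i ∈ Finset.Ioc m n} => F i ω) = v := by
          funext i
          have hi : (i : ℕ) ∈ Finset.Icc m₀ n := by
            have := i.2; simp only [Finset.mem_Ioc] at this
            simp only [Finset.mem_Icc]; omega
          rw [hall i hi, glueFn_gt n m₀ m u h v i.2]
        show ((fun i : {i // i ∈ Finset.Ico m₀ m} => F i ω), F m ω,
          (fun i : {i // i ∈ Finset.Ioc m n} => F i ω)) = (u, h, v)
        rw [e1, e2, e3]
    rw [h1, hInd (glueFn n m₀ m u h v)]
    have hsetsplit : Finset.Icc m₀ n = Finset.Ico m₀ m ∪ insert m (Finset.Ioc m n) := by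
      ext i
      simp only [Finset.mem_Icc, Finset.mem_Ico, Finset.mem_Ioc, Finset.mem_union,
        Finset.mem_insert]
      omega
    have hdisj : Disjoint (Finset.Ico m₀ m) (insert m (Finset.Ioc m n)) := by
      rw [Finset.disjoint_left]
      intro i hi1 hi2
      simp only [Finset.mem_Ico] at hi1
      simp only [Finset.mem_insert, Finset.mem_Ioc] at hi2
      omega
    rw [hsetsplit, Finset.prod_union hdisj, Finset.prod_insert (by simp [Finset.mem_Ioc])]
    have e1 : (∏ i ∈ Finset.Ico m₀ m, pr p (fun ω => F i ω = glueFn n m₀ m u h v i)) = P1 u := by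
      rw [hP1, ← Finset.prod_coe_sort]
      refine Finset.prod_congr rfl fun i _ => ?_
      rw [glueFn_lt n m₀ m u h v i.2]
    have e2 : pr p (fun ω => F m ω = glueFn n m₀ m u h v m) = q m h := by
      rw [glueFn_eq]
    have e3 : (∏ i ∈ Finset.Ioc m n, pr p (fun ω => F i ω = glueFn n m₀ m u h v i)) = P2 v := by
      rw [hP2, ← Finset.prod_coe_sort]
      refine Finset.prod_congr rfl fun i _ => ?_
      rw [glueFn_gt n m₀ m u h v i.2]
    rw [e1, e2, e3]
  -- sums of the marginal weights
  have hsum1 : (∑ u : ∀ i : {i // i ∈ Finset.Ico m₀ m},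
      (Fin (i : ℕ) → Bool) → (Fin (i : ℕ) → Bool), P1 u) = 1 := by
    rw [hP1]
    rw [← Fintype.prod_sum (fun (i : {i // i ∈ Finset.Ico m₀ m}) h => q i h)]
    exact Finset.prod_eq_one fun i _ => hq1 i
  have hsum2 : (∑ v : ∀ i : {i // i ∈ Finset.Ioc m n},
      (Fin (i : ℕ) → Bool) → (Fin (i : ℕ) → Bool), P2 v) = 1 := by
    rw [hP2]
    rw [← Fintype.prod_sum (fun (i : {i // i ∈ Finset.Ioc m n}) h => q i h)]
    exact Finset.prod_eq_one fun i _ => hq1 i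
  -- the pairwise independence computation
  have hsumQ : ∀ a b : Fin m → Bool, a ≠ b →
      (∑ h : (Fin m → Bool) → (Fin m → Bool), if h a = h b then q m h else 0)
        = (1 / 2 : ℝ) ^ m := by
    intro a b hab
    calc (∑ h : (Fin m → Bool) → (Fin m → Bool), if h a = h b then q m h else 0)
        = ∑ h : (Fin m → Bool) → (Fin m → Bool),
            pr p (fun ω => F m ω = h ∧ F m ω a = F m ω b) := by
          refine Finset.sum_congr rfl fun h _ => ?_
          by_cases hc : h a = h b
          · rw [if_pos hc]
            exact (pr_congr fun ω =>
              ⟨fun ⟨h1, _⟩ => h1, fun h1 => ⟨h1, by rw [h1]; exact hc⟩⟩).symm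
          · rw [if_neg hc]
            refine ((pr_congr (E' := fun _ => False) fun ω =>
              ⟨fun ⟨h1, h2⟩ => hc (by rw [← h1]; exact h2), False.elim⟩).trans pr_false).symm
      _ = pr p (fun ω => F m ω a = F m ω b) := (pr_partition _ _).symm
      _ = ∑ c : Fin m → Bool, pr p (fun ω => F m ω a = c ∧ F m ω b = c) := by
          rw [pr_partition (fun ω => F m ω a) (fun ω => F m ω a = F m ω b)]
          exact Finset.sum_congr rfl fun c _ => pr_congr fun ω =>
            ⟨fun ⟨h1, h2⟩ => ⟨h1, h2.symm.trans h1⟩, fun ⟨h1, h2⟩ => ⟨h1, h1.trans h2.symm⟩⟩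
      _ = ∑ _c : Fin m → Bool, ((1 : ℝ) / 2 ^ m) ^ 2 :=
          Finset.sum_congr rfl fun c _ => hFpair m hm1 hm2 a b hab c c
      _ = (2 : ℝ) ^ m * ((1 : ℝ) / 2 ^ m) ^ 2 := by
          rw [Finset.sum_const, Finset.card_univ]
          simp [nsmul_eq_mul]
      _ = (1 / 2 : ℝ) ^ m := by
          have h2 : ((2 : ℝ) ^ m) ≠ 0 := by positivity
          field_simp
          rw [← mul_pow]; norm_num
  -- assemble
  calc pr p (fun ω => ∃ hm : m ≤ n,
      msb m hm (stUp n (fun i => F i ω) m₀ x (m - m₀)) ≠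
        msb m hm (stUp n (fun i => F i ω) m₀ y (m - m₀)) ∧
      F m ω (msb m hm (stUp n (fun i => F i ω) m₀ x (m - m₀))) =
        F m ω (msb m hm (stUp n (fun i => F i ω) m₀ y (m - m₀))))
      = ∑ z, pr p (fun ω => T3 ω = z ∧ ∃ hm : m ≤ n,
          msb m hm (stUp n (fun i => F i ω) m₀ x (m - m₀)) ≠
            msb m hm (stUp n (fun i => F i ω) m₀ y (m - m₀)) ∧
          F m ω (msb m hm (stUp n (fun i => F i ω) m₀ x (m - m₀))) =
            F m ω (msb m hm (stUp n (fun i => F i ω) m₀ y (m - m₀)))) :=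
        pr_partition T3 _
    _ = ∑ u, ∑ h, ∑ v, (if (A u ≠ B u ∧ h (A u) = h (B u)) then P1 u * (q m h * P2 v)
          else 0) := by
        rw [Fintype.sum_prod_type]
        refine Finset.sum_congr rfl fun u _ => ?_
        rw [Fintype.sum_prod_type]
        refine Finset.sum_congr rfl fun h _ => ?_
        refine Finset.sum_congr rfl fun v _ => ?_
        by_cases hC : (A u ≠ B u ∧ h (A u) = h (B u))
        · rw [if_pos hC, ← hPtup u h v]
          exact pr_congr fun ω => ⟨fun ⟨a, _⟩ => a, fun a => ⟨a, (hEvC u h v ω a).mpr hC⟩⟩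
        · rw [if_neg hC]
          exact (pr_congr (E' := fun _ => False) fun ω =>
            ⟨fun ⟨ht, hEv⟩ => hC ((hEvC u h v ω ht).mp hEv), False.elim⟩).trans pr_false
    _ = ∑ u, ∑ h, (if (A u ≠ B u ∧ h (A u) = h (B u)) then P1 u * q m h else 0) := by
        refine Finset.sum_congr rfl fun u _ => Finset.sum_congr rfl fun h _ => ?_
        by_cases hC : (A u ≠ B u ∧ h (A u) = h (B u))
        · rw [if_pos hC]
          calc (∑ v, if (A u ≠ B u ∧ h (A u) = h (B u)) then P1 u * (q m h * P2 v) else 0)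
              = ∑ v, P1 u * (q m h * P2 v) := Finset.sum_congr rfl fun v _ => if_pos hC
            _ = P1 u * (q m h * ∑ v, P2 v) := by rw [← Finset.mul_sum, ← Finset.mul_sum]
            _ = P1 u * q m h := by rw [hsum2, mul_one]
        · rw [if_neg hC]
          exact Finset.sum_eq_zero fun v _ => if_neg hC
    _ ≤ ∑ u, P1 u * (1 / 2 : ℝ) ^ m := by
        refine Finset.sum_le_sum fun u _ => ?_
        by_cases hAB : A u ≠ B u
        · have : (∑ h, if (A u ≠ B u ∧ h (A u) = h (B u)) then P1 u * q m h else 0)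
              = P1 u * ∑ h, (if h (A u) = h (B u) then q m h else 0) := by
            rw [Finset.mul_sum]
            refine Finset.sum_congr rfl fun h _ => ?_
            by_cases hc : h (A u) = h (B u)
            · rw [if_pos ⟨hAB, hc⟩, if_pos hc]
            · rw [if_neg (fun hx => hc hx.2), if_neg hc, mul_zero]
          rw [this, hsumQ (A u) (B u) hAB]
        · have : (∑ h, if (A u ≠ B u ∧ h (A u) = h (B u)) then P1 u * q m h else 0) = 0 := by
            refine Finset.sum_eq_zero fun h _ => ?_
            rw [if_neg (fun hx => hAB hx.1)]
          rw [this]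
          exact mul_nonneg (hP1nn u) (by positivity)
    _ = (1 / 2 : ℝ) ^ m := by rw [← Finset.sum_mul, hsum1, one_mul]


/-- If `x ≠ y` agree on their last `d` bits but differ on their last
`d + 1` bits, then the collision probability of the multi-cut labelling map satisfies
`Pr[r(x) = r(y)] ≤ 2^{d+1} / 2^n`. -/
theorem statement6
    (n m₀ : ℕ) (hn : 1 ≤ n) (hm₀ : 1 ≤ m₀) (hm₀n : m₀ ≤ n)
    (Ω : Type*) [Fintype Ω] (p : Ω → ℝ)
    (hp0 : ∀ ω, 0 ≤ p ω) (hp1 : ∑ ω, p ω = 1)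
    (F : ∀ m : ℕ, Ω → (Fin m → Bool) → (Fin m → Bool))
    -- each `F m` (for `m₀ ≤ m ≤ n`) is a pairwise independent random function
    (hFpair : ∀ m, m₀ ≤ m → m ≤ n → ∀ x y : Fin m → Bool, x ≠ y →
      ∀ a b : Fin m → Bool,
        pr p (fun ω => F m ω x = a ∧ F m ω y = b) = ((1 : ℝ) / 2 ^ m) ^ 2)
    -- `F_{m₀}, …, F_n` are mutually independent
    (hInd : ∀ g : ∀ m : ℕ, (Fin m → Bool) → (Fin m → Bool),
      pr p (fun ω => ∀ m ∈ Finset.Icc m₀ n, F m ω = g m)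
        = ∏ m ∈ Finset.Icc m₀ n, pr p (fun ω => F m ω = g m))
    (d : ℕ) (hd : d + 1 ≤ n) (x y : Fin n → Bool) (hxy : x ≠ y)
    (hlow : lsb d x = lsb d y) (hdiff : lsb (d + 1) x ≠ lsb (d + 1) y) :
    pr p (fun ω => rRec n (fun m => F m ω) m₀ x = rRec n (fun m => F m ω) m₀ y)
      ≤ 2 ^ (d + 1) / 2 ^ n := by
  classical
  have hkn : n - d - 1 < n := by omega
  -- `x` and `y` agree on positions `≥ n - d`
  have hagree : ∀ i : Fin n, n - d ≤ (i : ℕ) → x i = y i := by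
    intro i hi
    have hin := i.2
    have hs : (i : ℕ) - (n - d) < d := by omega
    have h1 := congrFun hlow ⟨(i : ℕ) - (n - d), hs⟩
    simp only [lsb] at h1
    have hcond : n - d + ((i : ℕ) - (n - d)) < n := by omega
    rw [dif_pos hcond, dif_pos hcond] at h1
    have he : (⟨n - d + ((i : ℕ) - (n - d)), hcond⟩ : Fin n) = i := Fin.ext (by simp; omega)
    rwa [he] at h1
  -- `x` and `y` differ at position `n - d - 1`
  have hne : x ⟨n - d - 1, hkn⟩ ≠ y ⟨n - d - 1, hkn⟩ := by
    intro hk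
    apply hdiff
    funext s
    have hs2 := s.2
    simp only [lsb]
    have hcond : n - (d + 1) + (s : ℕ) < n := by omega
    rw [dif_pos hcond, dif_pos hcond]
    by_cases h0 : (s : ℕ) = 0
    · have he : (⟨n - (d + 1) + (s : ℕ), hcond⟩ : Fin n) = ⟨n - d - 1, hkn⟩ :=
        Fin.ext (by simp; omega)
      rw [he]; exact hk
    · exact hagree ⟨n - (d + 1) + (s : ℕ), hcond⟩ (by show n - d ≤ n - (d+1) + (s:ℕ); omega)
  -- union bound over the relevant steps
  have hub : pr p (fun ω => rRec n (fun m => F m ω) m₀ x = rRec n (fun m => F m ω) m₀ y)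
      ≤ ∑ m ∈ Finset.Icc (max m₀ (n - d)) n, pr p (fun ω => ∃ hm : m ≤ n,
          msb m hm (stUp n (fun i => F i ω) m₀ x (m - m₀)) ≠
            msb m hm (stUp n (fun i => F i ω) m₀ y (m - m₀)) ∧
          F m ω (msb m hm (stUp n (fun i => F i ω) m₀ x (m - m₀))) =
            F m ω (msb m hm (stUp n (fun i => F i ω) m₀ y (m - m₀)))) := by
    apply pr_union_bound hp0
    intro ω hc
    obtain ⟨m, h1, h2, hm, hx1, hx2⟩ :=
      det_collision n m₀ d hm₀n hd (fun i => F i ω) x y hxy hagree hne hc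
    exact ⟨m, Finset.mem_Icc.mpr ⟨max_le h1 h2, hm⟩, hm, hx1, hx2⟩
  have hub2 : (∑ m ∈ Finset.Icc (max m₀ (n - d)) n, pr p (fun ω => ∃ hm : m ≤ n,
          msb m hm (stUp n (fun i => F i ω) m₀ x (m - m₀)) ≠
            msb m hm (stUp n (fun i => F i ω) m₀ y (m - m₀)) ∧
          F m ω (msb m hm (stUp n (fun i => F i ω) m₀ x (m - m₀))) =
            F m ω (msb m hm (stUp n (fun i => F i ω) m₀ y (m - m₀)))))
      ≤ ∑ m ∈ Finset.Icc (max m₀ (n - d)) n, (1 / 2 : ℝ) ^ m := by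
    refine Finset.sum_le_sum fun m hm => ?_
    have hmm := Finset.mem_Icc.mp hm
    exact key_bound n m₀ p hp0 hp1 F hFpair hInd x y m
      (le_trans (le_max_left _ _) hmm.1) hmm.2
  have hgeo : (∑ m ∈ Finset.Icc (max m₀ (n - d)) n, (1 / 2 : ℝ) ^ m)
      ≤ 2 * (1 / 2 : ℝ) ^ (n - d) := by
    by_cases hMn' : max m₀ (n - d) ≤ n
    · have h1 : Finset.Icc (max m₀ (n - d)) n = Finset.Ico (max m₀ (n - d)) (n + 1) := by
        rw [Finset.Ico_add_one_right_eq_Icc]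
      rw [h1, geom_sum_Ico (by norm_num) (by omega)]
      have hMge : n - d ≤ max m₀ (n - d) := le_max_right _ _
      have hp' : ((1 : ℝ) / 2) ^ (max m₀ (n - d)) ≤ ((1 : ℝ) / 2) ^ (n - d) :=
        pow_le_pow_of_le_one (by norm_num) (by norm_num) hMge
      have hq' : (0 : ℝ) ≤ ((1 : ℝ) / 2) ^ (n + 1) := by positivity
      have key : ∀ a b : ℝ, (a - b) / ((1 : ℝ) / 2 - 1) = 2 * (b - a) := by
        intro a b; rw [show ((1 : ℝ) / 2 - 1) = -(1/2) by norm_num]; field_simp; ring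
      rw [key]
      linarith
    · rw [Finset.Icc_eq_empty (by omega), Finset.sum_empty]
      positivity
  have hfin : 2 * ((1 : ℝ) / 2) ^ (n - d) = 2 ^ (d + 1) / 2 ^ n := by
    have h2n : (2 : ℝ) ^ n = 2 ^ (d + 1) * 2 ^ (n - d - 1) := by
      rw [← pow_add]; congr 1; omega
    have h1 : (2 : ℝ) ^ (n - d) = 2 * 2 ^ (n - d - 1) := by
      rw [← pow_succ']; congr 1; omega
    rw [div_pow, one_pow, h2n, h1]
    have hpos : (2 : ℝ) ^ (n - d - 1) ≠ 0 := by positivity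
    field_simp
  linarith [hub, hub2, hgeo]
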